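/- Let Π' be a regular SCR polyhedral complex refining a complete regular SCR polyhedral complex Π (same recession fan), and let π_s^* denote the pullback on affine piecewise polynomial functions: for f = (f_v)_{v∈Π(0)} ∈ PP^k(Π), define (π_s^* f)_{v'} = f_v if v' = v ∈ Π(0), and (π_s^* f)_{v'} = f_{v,Λ} (the polynomial representing f on Λ) if v' ∉ Π(0), where Λ is any full-dimensional polyhedron of Π containing v' and v is any vertex of Λ. Then π_s^* f is well defined (independent of the choices of Λ and v) and π_s^* : PP^*(Π) → PP^*(Π') is an injective graded ring homomorphism. -/

import Mathlib

open scoped BigOperators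

namespace PPArakelov

/-- Evaluation of a rational-coefficient multivariate polynomial at a real point. -/
noncomputable def evalR {m : ℕ} (p : MvPolynomial (Fin m) ℚ) (x : Fin m → ℝ) : ℝ :=
  MvPolynomial.eval x (MvPolynomial.map (algebraMap ℚ ℝ) p)

/-- Realization of an integral vector in `N_ℝ`. -/
def ι {m : ℕ} (v : Fin m → ℤ) : Fin m → ℝ := fun i => (v i : ℝ)

/-- Realization of a rational vector in `N_ℝ`. -/
def ιQ {m : ℕ} (v : Fin m → ℚ) : Fin m → ℝ := fun i => (v i : ℝ)

/-- The convex cone generated by a finite set of vectors. -/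
def coneOf {m : ℕ} (s : Finset (Fin m → ℝ)) : Set (Fin m → ℝ) :=
  { x | ∃ c : (Fin m → ℝ) → ℝ, (∀ v, 0 ≤ c v) ∧ x = ∑ v ∈ s, c v • v }

/-- A rational polyhedral cone: one generated by finitely many lattice vectors. -/
def IsRatCone {m : ℕ} (σ : Set (Fin m → ℝ)) : Prop :=
  ∃ s : Finset (Fin m → ℤ), σ = coneOf (s.image ι)

/-- `τ` is a face of the cone `σ`. -/
def IsFaceOfCone {m : ℕ} (τ σ : Set (Fin m → ℝ)) : Prop :=
  ∃ u : (Fin m → ℝ) →ₗ[ℝ] ℝ, (∀ x ∈ σ, 0 ≤ u x) ∧ τ = {x ∈ σ | u x = 0}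

/-- A rational polyhedral fan in `N_ℝ = ℝ^m`. -/
structure Fan (m : ℕ) where
  cones : Set (Set (Fin m → ℝ))
  finite : cones.Finite
  rat : ∀ σ ∈ cones, IsRatCone σ
  face_mem : ∀ σ ∈ cones, ∀ τ, IsFaceOfCone τ σ → τ ∈ cones
  inter_face : ∀ σ ∈ cones, ∀ σ' ∈ cones,
    IsFaceOfCone (σ ∩ σ') σ ∧ IsFaceOfCone (σ ∩ σ') σ'

/-- The support `|Σ|` of a fan. -/
def Fan.supp {m : ℕ} (F : Fan m) : Set (Fin m → ℝ) := ⋃₀ F.cones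

/-- A piecewise polynomial function on a fan (ambient version): on each cone it is
given by a polynomial with rational coefficients. -/
def PPfun {m : ℕ} (F : Fan m) (f : (Fin m → ℝ) → ℝ) : Prop :=
  ∀ σ ∈ F.cones, ∃ p : MvPolynomial (Fin m) ℚ, ∀ x ∈ σ, f x = evalR p x

/-- A piecewise polynomial function defined on the support `|Σ|` of a fan. -/
def PPfunOn {m : ℕ} (F : Fan m) (f : ↥F.supp → ℝ) : Prop :=
  ∀ σ (hσ : σ ∈ F.cones), ∃ p : MvPolynomial (Fin m) ℚ,
    ∀ x (hx : x ∈ σ), f ⟨x, Set.mem_sUnion.mpr ⟨σ, hσ, hx⟩⟩ = evalR p x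

/-- A homogeneous piecewise polynomial function of degree `k` on a fan. -/
def PPHomog {m : ℕ} (F : Fan m) (k : ℕ) (f : (Fin m → ℝ) → ℝ) : Prop :=
  ∀ σ ∈ F.cones, ∃ p : MvPolynomial (Fin m) ℚ, p.IsHomogeneous k ∧ ∀ x ∈ σ, f x = evalR p x

/-- A piecewise linear function on a fan. -/
def IsPWLinear {m : ℕ} (F : Fan m) (f : (Fin m → ℝ) → ℝ) : Prop :=
  ∀ σ ∈ F.cones, ∃ ℓ : (Fin m → ℝ) →ₗ[ℝ] ℝ, ∀ x ∈ σ, f x = ℓ x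

/-- A regular (smooth) fan: every cone is generated by part of a basis of the lattice. -/
def Fan.IsRegular {m : ℕ} (F : Fan m) : Prop :=
  ∀ σ ∈ F.cones, ∃ (b : Module.Basis (Fin m) ℤ (Fin m → ℤ)) (s : Finset (Fin m)),
    σ = coneOf (s.image fun j => ι (b j))

/-- A compatible tuple `(f_σ)_{σ ∈ Σ}` of polynomial functions on the cones of a fan:
`f_τ = f_σ|_τ` whenever `τ` is a face of `σ`. -/
def CompatTuple {m : ℕ} (F : Fan m) (t : ∀ σ : F.cones, ↥(σ : Set (Fin m → ℝ)) → ℝ) : Prop :=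
  (∀ σ : F.cones, ∃ p : MvPolynomial (Fin m) ℚ,
      ∀ x : ↥(σ : Set (Fin m → ℝ)), t σ x = evalR p (x : Fin m → ℝ)) ∧
  ∀ σ τ : F.cones, IsFaceOfCone (τ : Set (Fin m → ℝ)) (σ : Set (Fin m → ℝ)) →
    ∀ x (hx : x ∈ (τ : Set (Fin m → ℝ))) (hx' : x ∈ (σ : Set (Fin m → ℝ))),
      t τ ⟨x, hx⟩ = t σ ⟨x, hx'⟩

/-- A rational polyhedron: convex hull of finitely many rational points plus a rational cone. -/
def polyhedronOf {m : ℕ} (V R : Finset (Fin m → ℚ)) : Set (Fin m → ℝ) :=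
  { x | ∃ a c : (Fin m → ℚ) → ℝ,
      (∀ p, 0 ≤ a p) ∧ (∑ p ∈ V, a p = 1) ∧ (∀ v, 0 ≤ c v) ∧
      x = (∑ p ∈ V, a p • ιQ p) + ∑ v ∈ R, c v • ιQ v }

def IsRatPolyhedron {m : ℕ} (P : Set (Fin m → ℝ)) : Prop :=
  ∃ V R : Finset (Fin m → ℚ), V.Nonempty ∧ P = polyhedronOf V R

/-- `Q` is a face of the polyhedron `P`. -/
def IsFaceOfPoly {m : ℕ} (Q P : Set (Fin m → ℝ)) : Prop :=
  ∃ (u : (Fin m → ℝ) →ₗ[ℝ] ℝ) (r : ℝ), (∀ x ∈ P, r ≤ u x) ∧ Q = {x ∈ P | u x = r}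

/-- A (strongly convex) rational polyhedral complex in `N_ℝ = ℝ^m`. -/
structure PolyComplex (m : ℕ) where
  polys : Set (Set (Fin m → ℝ))
  finite : polys.Finite
  rat : ∀ P ∈ polys, IsRatPolyhedron P
  face_mem : ∀ P ∈ polys, ∀ Q, IsFaceOfPoly Q P → Q.Nonempty → Q ∈ polys
  inter_face : ∀ P ∈ polys, ∀ P' ∈ polys, (P ∩ P').Nonempty →
    IsFaceOfPoly (P ∩ P') P ∧ IsFaceOfPoly (P ∩ P') P'

/-- A complete polyhedral complex covers all of `N_ℝ`. -/
def PolyComplex.IsComplete {m : ℕ} (C : PolyComplex m) : Prop := ⋃₀ C.polys = Set.univ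

/-- The vertices `Π(0)` of a polyhedral complex. -/
def PolyComplex.vtx {m : ℕ} (C : PolyComplex m) : Set (Fin m → ℝ) :=
  {v | ({v} : Set (Fin m → ℝ)) ∈ C.polys}

/-- The cone of a polyhedron `P` at a point `v` (the cone of `P` in the star fan `Π(v)`). -/
def coneAt {m : ℕ} (v : Fin m → ℝ) (P : Set (Fin m → ℝ)) : Set (Fin m → ℝ) :=
  {y | ∃ c : ℝ, 0 ≤ c ∧ ∃ x ∈ P, y = c • (x - v)}

/-- A piecewise polynomial function of degree `≤ k` on the star fan `Π(v)` at a vertex `v`. -/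
def StarPP {m : ℕ} (C : PolyComplex m) (v : Fin m → ℝ) (k : ℕ)
    (f : (Fin m → ℝ) → ℝ) : Prop :=
  ∀ P ∈ C.polys, v ∈ P → ∃ p : MvPolynomial (Fin m) ℚ, p.totalDegree ≤ k ∧
    ∀ y ∈ coneAt v P, f y = evalR p y

/-- A full-dimensional subset of `ℝ^m`. -/
def FullDim {m : ℕ} (P : Set (Fin m → ℝ)) : Prop := (interior P).Nonempty

/-- An affine piecewise polynomial function of degree `k` on a polyhedral complex:
a tuple `(f_v)` of piecewise polynomial functions on the star fans `Π(v)` such that on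
every full-dimensional polyhedron `Λ` with vertices `v, v'`, the representing polynomials
agree: `f_{v,Λ} = f_{v',Λ}` as polynomial functions on `N_ℝ`. -/
def AffinePP {m : ℕ} (C : PolyComplex m) (k : ℕ)
    (f : (Fin m → ℝ) → ((Fin m → ℝ) → ℝ)) : Prop :=
  (∀ v ∈ C.vtx, StarPP C v k (f v)) ∧
  ∀ Λ ∈ C.polys, FullDim Λ → ∀ v ∈ C.vtx, v ∈ Λ → ∀ v' ∈ C.vtx, v' ∈ Λ →
    ∀ p p' : MvPolynomial (Fin m) ℚ,
      p.totalDegree ≤ k → (∀ y ∈ coneAt v Λ, f v y = evalR p y) →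
      p'.totalDegree ≤ k → (∀ y ∈ coneAt v' Λ, f v' y = evalR p' y) →
      ∀ x : Fin m → ℝ, evalR p (x - v) = evalR p' (x - v')

/-- `y` lies in the support of the star fan of `v`. -/
def InStar {m : ℕ} (C : PolyComplex m) (v y : Fin m → ℝ) : Prop :=
  ∃ P ∈ C.polys, v ∈ P ∧ y ∈ coneAt v P

/-- A piecewise affine function with respect to the complex `C` (rational coefficients). -/
def IsPA {m : ℕ} (C : PolyComplex m) (g : (Fin m → ℝ) → ℝ) : Prop :=
  Continuous g ∧ ∀ Λ ∈ C.polys, ∃ p : MvPolynomial (Fin m) ℚ, p.totalDegree ≤ 1 ∧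
    ∀ x ∈ Λ, g x = evalR p x

/-- The tuple `f = (f_v)` induces the global function `g`. -/
def Induces {m : ℕ} (C : PolyComplex m) (f : (Fin m → ℝ) → ((Fin m → ℝ) → ℝ))
    (g : (Fin m → ℝ) → ℝ) : Prop :=
  ∀ v ∈ C.vtx, ∀ Λ ∈ C.polys, v ∈ Λ → ∀ x ∈ Λ, g x = f v (x - v)

/-- `γ` is a bounded edge of the complex `C` with endpoints `v ≠ w`. -/
def IsBddEdge {m : ℕ} (C : PolyComplex m) (γ : Set (Fin m → ℝ)) (v w : Fin m → ℝ) : Prop :=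
  γ ∈ C.polys ∧ v ≠ w ∧ v ∈ C.vtx ∧ w ∈ C.vtx ∧ γ = segment ℝ v w

/-- The condition that the tuple `(f_v)` lies in the kernel of the map `ρ`: for every
bounded edge `γ` with endpoints `v, w`, the pullbacks of `f_v` and `f_w` to the star of `γ`
agree (affinely based at the respective vertices). -/
def KerRho {m : ℕ} (C : PolyComplex m)
    (f : (Fin m → ℝ) → ((Fin m → ℝ) → ℝ)) : Prop :=
  ∀ γ v w, IsBddEdge C γ v w → ∀ P ∈ C.polys, γ ⊆ P → ∀ x ∈ P, f v (x - v) = f w (x - w)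

/-- `C'` refines (subdivides) `C`. -/
def Refines {m : ℕ} (C' C : PolyComplex m) : Prop :=
  ∀ P' ∈ C'.polys, ∃ P ∈ C.polys, P' ⊆ P

/-- The cone `c(P) ⊆ N_ℝ × ℝ_{≥0}` over a polyhedron `P ⊆ N_ℝ`. -/
def cPoly {m : ℕ} (P : Set (Fin m → ℝ)) : Set (Fin (m + 1) → ℝ) :=
  closure { z | 0 < z (Fin.last m) ∧ (fun i : Fin m => z i.castSucc / z (Fin.last m)) ∈ P }

/-- A regular SCR polyhedral complex: the cone `c(P)` of every polyhedron is a regular cone. -/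
def PolyComplex.IsRegular {m : ℕ} (C : PolyComplex m) : Prop :=
  ∀ P ∈ C.polys, ∃ (b : Module.Basis (Fin (m + 1)) ℤ (Fin (m + 1) → ℤ)) (s : Finset (Fin (m + 1))),
    cPoly P = coneOf (s.image fun j => ι (b j))

/-- The recession cone of a polyhedron. -/
def recCone {m : ℕ} (P : Set (Fin m → ℝ)) : Set (Fin m → ℝ) :=
  {y | ∀ x ∈ P, ∀ c : ℝ, 0 ≤ c → x + c • y ∈ P}

/-- The recession fan (as a set of cones) of a polyhedral complex. -/
def recSet {m : ℕ} (C : PolyComplex m) : Set (Set (Fin m → ℝ)) :=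
  {σ | ∃ P ∈ C.polys, σ = recCone P}

/-- Membership in `R(Σ)`: complete regular SCR polyhedral complexes with recession fan `Σ`. -/
def InRSigma {m : ℕ} (F : Fan m) (C : PolyComplex m) : Prop :=
  C.IsComplete ∧ C.IsRegular ∧ recSet C = F.cones

/-- Homogeneous piecewise polynomial functions of degree `k` on the fan `c(Π)`. -/
def PPconeHom {m : ℕ} (C : PolyComplex m) (k : ℕ) (f : (Fin (m + 1) → ℝ) → ℝ) : Prop :=
  ∀ P ∈ C.polys, ∃ p : MvPolynomial (Fin (m + 1)) ℚ, p.IsHomogeneous k ∧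
    ∀ z ∈ cPoly P, f z = evalR p z

/-- `PP^k_Σ(N_ℝ ⊕ ℝ_{≥0})`: functions that are piecewise polynomial of degree `k`
with respect to `c(Π)` for some `Π ∈ R(Σ)`. -/
def PPSigma {m : ℕ} (F : Fan m) (k : ℕ) (f : (Fin (m + 1) → ℝ) → ℝ) : Prop :=
  ∃ C : PolyComplex m, InRSigma F C ∧ PPconeHom C k f

/-- The canonical piecewise-linear function attached to the ray through `v` (value `1` at
`v`, vanishing on cones not containing `v`). -/
def IsRayFunGen {m : ℕ} (F : Fan m) (v : Fin m → ℝ) (f : (Fin m → ℝ) → ℝ) : Prop :=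
  IsPWLinear F f ∧ PPfun F f ∧ f v = 1 ∧
  ∀ σ ∈ F.cones, v ∉ σ → ∀ x ∈ σ, f x = 0

/-- A family `σ ↦ φ_σ` of canonical piecewise polynomial generators: `φ_σ` is the product
of the ray functions of the rays of the regular cone `σ`. -/
def IsCanonFamily {m : ℕ} (F : Fan m) (Φ : Set (Fin m → ℝ) → ((Fin m → ℝ) → ℝ)) : Prop :=
  ∀ σ ∈ F.cones, ∃ (b : Module.Basis (Fin m) ℤ (Fin m → ℤ)) (s : Finset (Fin m))
    (rf : Fin m → ((Fin m → ℝ) → ℝ)),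
      σ = coneOf (s.image fun j => ι (b j)) ∧
      (∀ j ∈ s, IsRayFunGen F (ι (b j)) (rf j)) ∧
      ∀ x, Φ σ x = ∏ j ∈ s, rf j x

/-- A maximal (full-dimensional) cone of a fan. -/
def IsMaxCone {m : ℕ} (F : Fan m) (σ : Set (Fin m → ℝ)) : Prop :=
  σ ∈ F.cones ∧ Submodule.span ℝ σ = ⊤

/-- `σ` is the minimal cone of `F` containing the set `S`. -/
def IsMinConeOver {m : ℕ} (F : Fan m) (S σ : Set (Fin m → ℝ)) : Prop :=
  σ ∈ F.cones ∧ S ⊆ σ ∧ ∀ τ ∈ F.cones, S ⊆ τ → σ ⊆ τ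

/-- The polynomial `p` represents the function `f` on the cone `σ`. -/
def Represents {m : ℕ} (f : (Fin m → ℝ) → ℝ) (σ : Set (Fin m → ℝ))
    (p : MvPolynomial (Fin m) ℚ) : Prop :=
  ∀ x ∈ σ, f x = evalR p x

/-- Maximal cones of `F'` whose image under `μ` has minimal containing cone `σ` in `F`. -/
def MaxOver {m : ℕ} (F' F : Fan m) (μ : (Fin m → ℝ) ≃ₗ[ℝ] (Fin m → ℝ))
    (σ : Set (Fin m → ℝ)) : Set (Set (Fin m → ℝ)) :=
  {σ' | IsMaxCone F' σ' ∧ IsMinConeOver F (μ '' σ') σ}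

/-- The operator `P` realizes the pushforward formula
`(π_* f)_σ = φ_σ · Σ_{μ(σ')=σ} φ_{σ'}^{-1} f_{σ'}` on maximal cones (with cleared
denominators, as an identity of the unique representing polynomials). -/
def PushFormula {m : ℕ} (F' F : Fan m) (μ : (Fin m → ℝ) ≃ₗ[ℝ] (Fin m → ℝ))
    (Φ' Φ : Set (Fin m → ℝ) → ((Fin m → ℝ) → ℝ))
    (P : ((Fin m → ℝ) → ℝ) → ((Fin m → ℝ) → ℝ)) : Prop :=
  (∀ f, PPfun F' f → PPfun F (P f)) ∧
  ∀ f, PPfun F' f →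
    ∀ q pΦ' : Set (Fin m → ℝ) → MvPolynomial (Fin m) ℚ,
      (∀ σ', IsMaxCone F' σ' → Represents f σ' (q σ') ∧ Represents (Φ' σ') σ' (pΦ' σ')) →
      ∀ σ, IsMaxCone F σ →
        ∀ r pσ : MvPolynomial (Fin m) ℚ, Represents (P f) σ r → Represents (Φ σ) σ pσ →
          ∀ y : Fin m → ℝ,
            evalR r y * ∏ᶠ σ' ∈ MaxOver F' F μ σ, evalR (pΦ' σ') (μ.symm y)
              = evalR pσ y * ∑ᶠ σ' ∈ MaxOver F' F μ σ,
                  evalR (q σ') (μ.symm y) *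
                    ∏ᶠ σ'' ∈ (MaxOver F' F μ σ) \ {σ'}, evalR (pΦ' σ'') (μ.symm y)

/-- The pullback of an affine piecewise polynomial tuple along a refinement `C' → C`. -/
def IsPullbackTuple {m : ℕ} (C C' : PolyComplex m) (k : ℕ)
    (f f' : (Fin m → ℝ) → ((Fin m → ℝ) → ℝ)) : Prop :=
  (∀ v' ∈ C'.vtx, v' ∈ C.vtx → ∀ y, InStar C' v' y → f' v' y = f v' y) ∧
  (∀ v' ∈ C'.vtx, v' ∉ C.vtx → ∀ Λ ∈ C.polys, FullDim Λ → v' ∈ Λ →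
    ∀ v ∈ C.vtx, v ∈ Λ → ∀ p : MvPolynomial (Fin m) ℚ, p.totalDegree ≤ k →
      (∀ y ∈ coneAt v Λ, f v y = evalR p y) →
      ∀ P' ∈ C'.polys, v' ∈ P' → P' ⊆ Λ → ∀ y ∈ coneAt v' P',
        f' v' y = evalR p ((y + v') - v))

/-- The piecewise linear function `φ_{v,γ}` attached at the vertex `v` to the edge `γ`
towards the vertex `w`: linear on the cones of `Π(v)`, vanishing on cones of polyhedra
not containing `w`, normalized on the ray towards `w`. -/
def IsRayFunAt {m : ℕ} (C : PolyComplex m) (v w : Fin m → ℝ)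
    (φ : (Fin m → ℝ) → ℝ) : Prop :=
  (∀ P ∈ C.polys, v ∈ P → ∃ ℓ : (Fin m → ℝ) →ₗ[ℝ] ℝ, ∀ y ∈ coneAt v P, φ y = ℓ y) ∧
  (∀ P ∈ C.polys, v ∈ P → w ∉ P → ∀ y ∈ coneAt v P, φ y = 0) ∧
  (∃ c : ℝ, 0 < c ∧ φ (c • (w - v)) = 1)

/-- `g = -γρ(f)`: the characterization of the composite map `-γρ` in terms of
representing polynomials, following the explicit formula of the pushforward and pullback
maps: `(-γρ f)_v = Σ_γ (u_{v,γ*} u_{v_γ,γ}^* f_{v_γ} - φ_{v,γ} f_v)`. -/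
def IsMinusGammaRho {m : ℕ} (C : PolyComplex m) (k : ℕ)
    (φ : (Fin m → ℝ) → (Fin m → ℝ) → ((Fin m → ℝ) → ℝ))
    (f g : (Fin m → ℝ) → ((Fin m → ℝ) → ℝ)) : Prop :=
  ∀ v ∈ C.vtx, ∀ P ∈ C.polys, FullDim P → v ∈ P →
    ∀ q : (Fin m → ℝ) → MvPolynomial (Fin m) ℚ,
      (∀ u ∈ C.vtx, u ∈ P →
        (q u).totalDegree ≤ k ∧ ∀ y ∈ coneAt u P, f u y = evalR (q u) y) →
      ∀ y ∈ coneAt v P,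
        g v y = ∑ᶠ w ∈ {w | w ∈ C.vtx ∧ w ≠ v ∧ segment ℝ v w ∈ C.polys ∧
                            segment ℝ v w ⊆ P},
          φ v w y * (evalR (q w) ((y + v) - w) - evalR (q v) y)



open scoped Pointwise

lemma evalR_eq_aeval {m : ℕ} (p : MvPolynomial (Fin m) ℚ) (x : Fin m → ℝ) :
    evalR p x = MvPolynomial.aeval x p := by
  rw [evalR, MvPolynomial.eval_map, MvPolynomial.aeval_def]

lemma analytic_evalR {m : ℕ} (p : MvPolynomial (Fin m) ℚ) :
    AnalyticOnNhd ℝ (fun x => evalR p x) Set.univ := by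
  induction p using MvPolynomial.induction_on with
  | C a =>
      have : (fun x : Fin m → ℝ => evalR (MvPolynomial.C a) x) = fun _ => (a : ℝ) := by
        funext x; simp [evalR]
      rw [this]; exact analyticOnNhd_const
  | add p q hp hq =>
      have : (fun x : Fin m → ℝ => evalR (p + q) x)
          = fun x => evalR p x + evalR q x := by
        funext x; simp [evalR]
      rw [this]; exact hp.add hq
  | mul_X p i hp =>
      have : (fun x : Fin m → ℝ => evalR (p * MvPolynomial.X i) x)
          = fun x => evalR p x * x i := by
        funext x; simp [evalR]
      rw [this]
      exact hp.mul ((ContinuousLinearMap.proj i : (Fin m → ℝ) →L[ℝ] ℝ).analyticOnNhd _)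

lemma analytic_shift {m : ℕ} (p : MvPolynomial (Fin m) ℚ) (a : Fin m → ℝ) :
    AnalyticOnNhd ℝ (fun x => evalR p (x - a)) Set.univ := by
  exact (analytic_evalR p).comp (analyticOnNhd_id.sub analyticOnNhd_const)
    (Set.mapsTo_univ _ _)

/-- Identity theorem: two analytic functions agreeing on a nonempty open set agree
everywhere. -/
lemma analytic_eq_univ {m : ℕ} {F G : (Fin m → ℝ) → ℝ}
    (hF : AnalyticOnNhd ℝ F Set.univ) (hG : AnalyticOnNhd ℝ G Set.univ)
    {U : Set (Fin m → ℝ)} (hU : IsOpen U) (hne : U.Nonempty)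
    (h : ∀ x ∈ U, F x = G x) : ∀ z, F z = G z := by
  obtain ⟨z₀, hz₀⟩ := hne
  have hev : (fun x => F x - G x) =ᶠ[nhds z₀] 0 := by
    filter_upwards [hU.mem_nhds hz₀] with x hx
    simp [h x hx]
  have := (hF.sub hG).eqOn_zero_of_preconnected_of_eventuallyEq_zero
    isPreconnected_univ (Set.mem_univ z₀) hev
  intro z
  have hz := this (Set.mem_univ z)
  simpa [sub_eq_zero] using hz

lemma analytic_affine_comb {m r : ℕ} {F : (Fin m → ℝ) → ℝ}
    (hF : AnalyticOnNhd ℝ F Set.univ) (v : Fin m → ℝ) (t : Fin r → (Fin m → ℝ)) :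
    AnalyticOnNhd ℝ (fun c : Fin r → ℝ => F (v + ∑ i, c i • t i)) Set.univ := by
  have hL : AnalyticOnNhd ℝ
      (fun c : Fin r → ℝ => v + ∑ i, c i • t i) Set.univ := by
    have : (fun c : Fin r → ℝ => v + ∑ i, c i • t i)
        = fun c => v + (∑ i, (ContinuousLinearMap.proj i :
            (Fin r → ℝ) →L[ℝ] ℝ).smulRight (t i)) c := by
      funext c
      simp [ContinuousLinearMap.sum_apply]
    rw [this]
    exact analyticOnNhd_const.add
      ((∑ i, (ContinuousLinearMap.proj i :
        (Fin r → ℝ) →L[ℝ] ℝ).smulRight (t i)).analyticOnNhd _)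
  exact hF.comp hL (Set.mapsTo_univ _ _)

/-- An analytic function agreeing with another on a convex set `S` agrees with it
on `v' + span (S - v')` for any `v' ∈ S`. -/
lemma eqOn_span {m : ℕ} {F G : (Fin m → ℝ) → ℝ}
    (hF : AnalyticOnNhd ℝ F Set.univ) (hG : AnalyticOnNhd ℝ G Set.univ)
    {S : Set (Fin m → ℝ)} (hconv : Convex ℝ S) {v' : Fin m → ℝ} (hv' : v' ∈ S)
    (heq : ∀ x ∈ S, F x = G x) :
    ∀ y ∈ Submodule.span ℝ ((fun x => x - v') '' S), F (v' + y) = G (v' + y) := by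
  intro y hy
  obtain ⟨r, d, t, hrep⟩ := Submodule.mem_span_set'.mp hy
  have hs : ∀ i : Fin r, ∃ s ∈ S, (t i : Fin m → ℝ) = s - v' := by
    intro i
    obtain ⟨s, hsS, hse⟩ := (t i).2
    exact ⟨s, hsS, hse.symm⟩
  choose s hsS hse using hs
  set H : (Fin r → ℝ) → ℝ := fun c => F (v' + ∑ i, c i • (s i - v'))
    - G (v' + ∑ i, c i • (s i - v')) with hH
  have hHa : AnalyticOnNhd ℝ H Set.univ :=
    (analytic_affine_comb hF v' _).sub (analytic_affine_comb hG v' _)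
  set U : Set (Fin r → ℝ) := {c | (∀ i, 0 < c i) ∧ ∑ i, c i < 1} with hUdef
  have hUo : IsOpen U := by
    have : U = (⋂ i, {c : Fin r → ℝ | 0 < c i}) ∩ {c : Fin r → ℝ | ∑ i, c i < 1} := by
      ext c; simp [hUdef, Set.mem_iInter]
    rw [this]
    apply IsOpen.inter
    · exact isOpen_iInter_of_finite fun i =>
        isOpen_lt continuous_const (continuous_apply i)
    · exact isOpen_lt (continuous_finset_sum _ fun i _ => continuous_apply i)
        continuous_const
  have hUne : U.Nonempty := by
    refine ⟨fun _ => 1 / (r + 1), fun i => by positivity, ?_⟩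
    rw [Finset.sum_const, Finset.card_univ, Fintype.card_fin, nsmul_eq_mul,
      mul_one_div, div_lt_one (by positivity)]
    linarith
  have hmem : ∀ c ∈ U, v' + ∑ i, c i • (s i - v') ∈ S := by
    intro c hc
    obtain ⟨hc1, hc2⟩ := hc
    have h1 : v' + ∑ i, c i • (s i - v')
        = (1 - ∑ i, c i) • v' + ∑ i, c i • s i := by
      rw [sub_smul, one_smul]
      simp only [smul_sub]
      rw [Finset.sum_sub_distrib, ← Finset.sum_smul]
      abel
    rw [h1]
    have := hconv.sum_mem (t := (Finset.univ : Finset (Option (Fin r))))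
      (w := fun o => Option.elim o (1 - ∑ i, c i) c)
      (z := fun o => Option.elim o v' s) ?_ ?_ ?_
    · simpa [Fintype.sum_option] using this
    · rintro (_|i) _
      · simp only [Option.elim]; linarith
      · exact le_of_lt (hc1 i)
    · simp [Fintype.sum_option]
    · rintro (_|i) _
      · exact hv'
      · exact hsS i
  have hH0 : ∀ c ∈ U, H c = (fun _ => (0:ℝ)) c := by
    intro c hc
    simp only [hH]
    rw [heq _ (hmem c hc)]
    simp
  have hall := analytic_eq_univ hHa analyticOnNhd_const hUo hUne hH0
  have hd := hall d
  have hrw : (∑ i, d i • (s i - v')) = y := by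
    rw [← hrep]; congr 1; funext i; rw [← hse i]
  have h2 : F (v' + ∑ i, d i • (s i - v')) - G (v' + ∑ i, d i • (s i - v')) = 0 := hd
  rw [hrw] at h2
  linarith

/-- The finitely generated cone on the family `g` over the finset `s`. -/
def Kset {m : ℕ} {α : Type*} (g : α → (Fin m → ℝ)) (s : Finset α) : Set (Fin m → ℝ) :=
  {x | ∃ c : α → ℝ, (∀ i, 0 ≤ c i) ∧ x = ∑ i ∈ s, c i • g i}

lemma Kset_mono {m : ℕ} {α : Type*} (g : α → (Fin m → ℝ)) {t s : Finset α}
    (h : t ⊆ s) : Kset g t ⊆ Kset g s := by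
  classical
  rintro x ⟨c, hc, rfl⟩
  refine ⟨fun a => if a ∈ t then c a else 0, fun a => ?_, ?_⟩
  · by_cases ha : a ∈ t
    · simpa [ha] using hc a
    · simp [ha]
  · have h1 : ∑ a ∈ t, c a • g a = ∑ a ∈ t, (if a ∈ t then c a else 0) • g a :=
      Finset.sum_congr rfl fun a ha => by simp [ha]
    rw [h1]
    exact Finset.sum_subset h fun a _ ha => by simp [ha]

lemma cara {m : ℕ} {α : Type*} (g : α → (Fin m → ℝ)) :
    ∀ (N : ℕ) (s : Finset α), s.card ≤ N → ∀ x ∈ Kset g s,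
      ∃ t ⊆ s, LinearIndependent ℝ (fun i : ↥t => g ↑i) ∧ x ∈ Kset g t := by
  classical
  intro N
  induction N with
  | zero =>
      intro s hs x hx
      rw [Nat.le_zero, Finset.card_eq_zero] at hs
      subst hs
      exact ⟨∅, subset_rfl, linearIndependent_empty_type, hx⟩
  | succ N IH =>
      intro s hs x hx
      by_cases hli : LinearIndependent ℝ (fun i : ↥s => g ↑i)
      · exact ⟨s, subset_rfl, hli, hx⟩
      · obtain ⟨c, hc, hcx⟩ := hx
        obtain ⟨d₀, hdsum₀, j₁, hj₁⟩ := Fintype.not_linearIndependent_iff.mp hli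
        have key : ∀ d : ↥s → ℝ, (∑ i, d i • g ↑i = 0) → (∃ i, 0 < d i) →
            ∃ t ⊆ s, LinearIndependent ℝ (fun i : ↥t => g ↑i) ∧ x ∈ Kset g t := by
          intro d hdsum hdpos
          obtain ⟨ip, hip⟩ := hdpos
          set T : Finset ↥s := Finset.univ.filter (fun i => 0 < d i) with hT
          have hTne : T.Nonempty := ⟨ip, by simp [hT, hip]⟩
          obtain ⟨i₀, hi₀T, hi₀min⟩ :=
            Finset.exists_min_image T (fun i => c ↑i / d i) hTne
          have hdi₀ : 0 < d i₀ := (Finset.mem_filter.mp hi₀T).2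
          set rr : ℝ := c ↑i₀ / d i₀ with hrr
          have hrr0 : 0 ≤ rr := div_nonneg (hc _) hdi₀.le
          set c' : α → ℝ := fun a => if h : a ∈ s then c a - rr * d ⟨a, h⟩ else 0
            with hc'
          have hc'0 : ∀ a, 0 ≤ c' a := by
            intro a
            by_cases h : a ∈ s
            · simp only [hc', dif_pos h]
              rcases lt_or_ge 0 (d ⟨a, h⟩) with hd | hd
              · have hmem : (⟨a, h⟩ : ↥s) ∈ T := by simp [hT, hd]
                have h2 := (le_div_iff₀ hd).mp (hi₀min _ hmem)
                linarith
              · nlinarith [hc a, mul_nonpos_of_nonneg_of_nonpos hrr0 hd]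
            · simp [hc', dif_neg h]
          have hxc' : x = ∑ a ∈ s, c' a • g a := by
            have h1 : ∑ a ∈ s, c' a • g a
                = ∑ i : ↥s, c' ↑i • g ↑i :=
              (Finset.sum_coe_sort s (fun a => c' a • g a)).symm
            have h2 : ∑ i : ↥s, c' ↑i • g ↑i
                = ∑ i : ↥s, (c ↑i • g ↑i - rr • (d i • g ↑i)) := by
              refine Finset.sum_congr rfl fun i _ => ?_
              have hci : c' ↑i = c ↑i - rr * d i := by
                simp only [hc', dif_pos i.2]
              rw [hci, sub_smul, smul_smul]
            rw [h1, h2, Finset.sum_sub_distrib, ← Finset.smul_sum, hdsum,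
              smul_zero, sub_zero, Finset.sum_coe_sort s (fun a => c a • g a)]
            exact hcx
          have hc'i₀ : c' ↑i₀ = 0 := by
            simp only [hc', dif_pos i₀.2, Subtype.coe_eta, hrr]
            field_simp
            ring
          have hxe : x ∈ Kset g (s.erase ↑i₀) := by
            refine ⟨c', hc'0, ?_⟩
            rw [Finset.sum_erase _ (by rw [hc'i₀, zero_smul])]
            exact hxc'
          have hcard : (s.erase ↑i₀).card ≤ N := by
            have := Finset.card_erase_of_mem i₀.2
            omega
          obtain ⟨t, hts, hli', hxt⟩ := IH (s.erase ↑i₀) hcard x hxe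
          exact ⟨t, hts.trans (Finset.erase_subset _ _), hli', hxt⟩
        rcases lt_or_gt_of_ne hj₁ with h | h
        · refine key (fun i => -d₀ i) ?_ ⟨j₁, neg_pos.mpr h⟩
          simp only [neg_smul, Finset.sum_neg_distrib, hdsum₀, neg_zero]
        · exact key d₀ hdsum₀ ⟨j₁, h⟩

lemma isClosed_Kset_of_li {m : ℕ} {α : Type*} (g : α → (Fin m → ℝ)) (t : Finset α)
    (hli : LinearIndependent ℝ (fun i : ↥t => g ↑i)) : IsClosed (Kset g t) := by
  classical
  set φ : (↥t → ℝ) →ₗ[ℝ] (Fin m → ℝ) :=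
    { toFun := fun c => ∑ i : ↥t, c i • g ↑i
      map_add' := by intro a b; simp [add_smul, Finset.sum_add_distrib]
      map_smul' := by intro r a; simp [mul_smul, Finset.smul_sum] } with hφ
  have hker : LinearMap.ker φ = ⊥ := by
    rw [LinearMap.ker_eq_bot']
    intro c hc
    have := Fintype.linearIndependent_iff.mp hli c hc
    funext i; exact this i
  have hemb := LinearMap.isClosedEmbedding_of_injective hker
  have himg : Kset g t = φ '' {c : ↥t → ℝ | ∀ i, 0 ≤ c i} := by
    ext x
    constructor
    · rintro ⟨c, hc, rfl⟩
      refine ⟨fun i => c ↑i, fun i => hc _, ?_⟩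
      simp only [hφ, LinearMap.coe_mk, AddHom.coe_mk]
      exact Finset.sum_coe_sort t (fun a => c a • g a)
    · rintro ⟨c, hc, rfl⟩
      refine ⟨fun a => if h : a ∈ t then c ⟨a, h⟩ else 0, ?_, ?_⟩
      · intro a
        by_cases h : a ∈ t
        · simpa [dif_pos h] using hc _
        · simp [dif_neg h]
      · simp only [hφ, LinearMap.coe_mk, AddHom.coe_mk]
        rw [← Finset.sum_coe_sort t
          (fun a => (if h : a ∈ t then c ⟨a, h⟩ else 0) • g a)]
        refine Finset.sum_congr rfl fun i _ => ?_
        simp [dif_pos i.2]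
  rw [himg]
  apply hemb.isClosedMap
  have : {c : ↥t → ℝ | ∀ i, 0 ≤ c i} = ⋂ i, {c : ↥t → ℝ | 0 ≤ c i} := by
    ext c; simp [Set.mem_iInter]
  rw [this]
  exact isClosed_iInter fun i => isClosed_le continuous_const (continuous_apply i)

lemma isClosed_Kset {m : ℕ} {α : Type*} (g : α → (Fin m → ℝ)) (s : Finset α) :
    IsClosed (Kset g s) := by
  classical
  have : Kset g s = ⋃ t ∈ {t : Finset α | t ⊆ s ∧
      LinearIndependent ℝ (fun i : ↥t => g ↑i)}, Kset g t := by
    ext x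
    simp only [Set.mem_iUnion, Set.mem_setOf_eq]
    constructor
    · intro hx
      obtain ⟨t, hts, hli, hxt⟩ := cara g s.card s le_rfl x hx
      exact ⟨t, ⟨hts, hli⟩, hxt⟩
    · rintro ⟨t, ⟨hts, _⟩, hxt⟩
      exact Kset_mono g hts hxt
  rw [this]
  refine Set.Finite.isClosed_biUnion ?_ fun t ht => isClosed_Kset_of_li g t ht.2
  exact Set.Finite.subset s.powerset.finite_toSet
    (fun t ht => by simpa [Finset.mem_powerset] using ht.1)

lemma isClosed_polyhedronOf {m : ℕ} (V R : Finset (Fin m → ℚ)) :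
    IsClosed (polyhedronOf V R) := by
  classical
  set A : Set (Fin m → ℝ) :=
    (fun a : ↥V → ℝ => ∑ i : ↥V, a i • ιQ ↑i) '' stdSimplex ℝ ↥V with hA
  have hAc : IsCompact A :=
    (isCompact_stdSimplex _ _).image
      (continuous_finset_sum _ fun i _ => (continuous_apply i).smul continuous_const)
  have heq : polyhedronOf V R = A + Kset ιQ R := by
    ext x
    constructor
    · rintro ⟨a, c, ha, hsum, hc, rfl⟩
      rw [Set.mem_add]
      refine ⟨∑ p ∈ V, a p • ιQ p, ?_, ∑ v ∈ R, c v • ιQ v, ⟨c, hc, rfl⟩, rfl⟩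
      refine ⟨fun i => a ↑i, ⟨fun i => ha _, ?_⟩, ?_⟩
      · rw [Finset.sum_coe_sort V a]; exact hsum
      · exact Finset.sum_coe_sort V (fun p => a p • ιQ p)
    · intro hx
      rw [Set.mem_add] at hx
      obtain ⟨u, ⟨a, ⟨ha0, ha1⟩, rfl⟩, w, ⟨c, hc0, rfl⟩, rfl⟩ := hx
      refine ⟨fun p => if h : p ∈ V then a ⟨p, h⟩ else 0, c, ?_, ?_, hc0, ?_⟩
      · intro p
        by_cases h : p ∈ V
        · simpa [dif_pos h] using ha0 _
        · simp [dif_neg h]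
      · rw [← Finset.sum_coe_sort V (fun p => if h : p ∈ V then a ⟨p, h⟩ else 0)]
        rw [← ha1]
        exact Finset.sum_congr rfl fun i _ => by simp [dif_pos i.2]
      · congr 1
        rw [← Finset.sum_coe_sort V
          (fun p => (if h : p ∈ V then a ⟨p, h⟩ else 0) • ιQ p)]
        exact (Finset.sum_congr rfl fun i _ => by simp [dif_pos i.2]).symm
  rw [heq]
  exact (isClosed_Kset ιQ R).add_left_of_isCompact hAc


/-! ### Basic properties of rational polyhedra -/

lemma mem_polyhedronOf_of_vertex {m : ℕ} {V R : Finset (Fin m → ℚ)}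
    {p₀ : Fin m → ℚ} (hp₀ : p₀ ∈ V) : ιQ p₀ ∈ polyhedronOf V R := by
  classical
  refine ⟨fun p => if p = p₀ then 1 else 0, 0, ?_, ?_, fun _ => le_rfl, ?_⟩
  · intro p
    by_cases h : p = p₀ <;> simp [h]
  · rw [Finset.sum_ite_eq' V p₀ (fun _ => (1:ℝ))]
    simp [hp₀]
  · have h1 : ∑ p ∈ V, (if p = p₀ then (1:ℝ) else 0) • ιQ p
        = ∑ p ∈ V, (if p = p₀ then ιQ p else 0) := by
      refine Finset.sum_congr rfl fun p _ => ?_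
      split <;> simp
    have h2 : ∑ p ∈ V, (if p = p₀ then ιQ p else 0) = ιQ p₀ := by
      rw [Finset.sum_ite_eq' V p₀ (fun p => ιQ p)]
      simp [hp₀]
    simp [h1, h2]

lemma convex_polyhedronOf {m : ℕ} (V R : Finset (Fin m → ℚ)) :
    Convex ℝ (polyhedronOf V R) := by
  rintro x ⟨a₁, c₁, ha₁, hs₁, hc₁, rfl⟩ y ⟨a₂, c₂, ha₂, hs₂, hc₂, rfl⟩ θ η hθ hη hsum
  refine ⟨fun p => θ * a₁ p + η * a₂ p, fun v => θ * c₁ v + η * c₂ v,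
    fun p => add_nonneg (mul_nonneg hθ (ha₁ p)) (mul_nonneg hη (ha₂ p)), ?_,
    fun v => add_nonneg (mul_nonneg hθ (hc₁ v)) (mul_nonneg hη (hc₂ v)), ?_⟩
  · rw [Finset.sum_add_distrib, ← Finset.mul_sum, ← Finset.mul_sum, hs₁, hs₂]
    simpa using hsum
  · simp only [smul_add, Finset.smul_sum]
    have h1 : ∀ (a₁ a₂ : (Fin m → ℚ) → ℝ) (S : Finset (Fin m → ℚ)),
        ∑ p ∈ S, (θ * a₁ p + η * a₂ p) • ιQ p
          = ∑ p ∈ S, θ • (a₁ p • ιQ p) + ∑ p ∈ S, η • (a₂ p • ιQ p) := by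
      intro a₁ a₂ S
      rw [← Finset.sum_add_distrib]
      refine Finset.sum_congr rfl fun p _ => ?_
      rw [add_smul, smul_smul, smul_smul]
    rw [h1 a₁ a₂ V, h1 c₁ c₂ R]
    abel

lemma isRatPolyhedron_props {m : ℕ} {P : Set (Fin m → ℝ)}
    (h : IsRatPolyhedron P) : IsClosed P ∧ Convex ℝ P ∧ P.Nonempty := by
  obtain ⟨V, R, hV, rfl⟩ := h
  obtain ⟨p₀, hp₀⟩ := hV
  exact ⟨isClosed_polyhedronOf V R, convex_polyhedronOf V R,
    ⟨ιQ p₀, mem_polyhedronOf_of_vertex hp₀⟩⟩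

lemma poly_closed {m : ℕ} {C : PolyComplex m} {P : Set (Fin m → ℝ)}
    (hP : P ∈ C.polys) : IsClosed P := (isRatPolyhedron_props (C.rat P hP)).1

lemma poly_convex {m : ℕ} {C : PolyComplex m} {P : Set (Fin m → ℝ)}
    (hP : P ∈ C.polys) : Convex ℝ P := (isRatPolyhedron_props (C.rat P hP)).2.1

lemma poly_nonempty {m : ℕ} {C : PolyComplex m} {P : Set (Fin m → ℝ)}
    (hP : P ∈ C.polys) : P.Nonempty := (isRatPolyhedron_props (C.rat P hP)).2.2

lemma vtx_rat {m : ℕ} {C : PolyComplex m} {v : Fin m → ℝ}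
    (hv : v ∈ C.vtx) : ∃ w : Fin m → ℚ, v = ιQ w := by
  obtain ⟨V, R, hV, heq⟩ := C.rat _ hv
  obtain ⟨p₀, hp₀⟩ := hV
  have : ιQ p₀ ∈ ({v} : Set (Fin m → ℝ)) := by
    rw [heq]; exact mem_polyhedronOf_of_vertex hp₀
  exact ⟨p₀, (Set.mem_singleton_iff.mp this).symm⟩

lemma poly_inter_mem {m : ℕ} {C : PolyComplex m} {P Q : Set (Fin m → ℝ)}
    (hP : P ∈ C.polys) (hQ : Q ∈ C.polys) (hne : (P ∩ Q).Nonempty) :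
    P ∩ Q ∈ C.polys :=
  C.face_mem P hP _ (C.inter_face P hP Q hQ hne).1 hne

/-! ### Faces and intrinsic interiors -/

lemma exists_extension_of_intrinsicInterior {m : ℕ} {P : Set (Fin m → ℝ)}
    {x₀ p : Fin m → ℝ} (hx₀ : x₀ ∈ intrinsicInterior ℝ P) (hp : p ∈ P) :
    ∃ ε : ℝ, 0 < ε ∧ x₀ + ε • (x₀ - p) ∈ P := by
  obtain ⟨y, hy, hyx⟩ := hx₀
  have hx₀P : x₀ ∈ P := by
    have := interior_subset hy
    simpa [hyx] using this
  have hmem : ∀ t : ℝ, AffineMap.lineMap p x₀ t ∈ affineSpan ℝ P := fun t =>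
    AffineMap.lineMap_mem t (subset_affineSpan ℝ P hp) (subset_affineSpan ℝ P hx₀P)
  set γ : ℝ → affineSpan ℝ P := fun t => ⟨AffineMap.lineMap p x₀ t, hmem t⟩ with hγ
  have hγc : Continuous γ :=
    Continuous.subtype_mk (AffineMap.lineMap_continuous) _
  have hγ1 : γ 1 = y := by
    apply Subtype.ext
    simp [hγ, hyx]
  have hopen : IsOpen (γ ⁻¹' interior ((↑) ⁻¹' P : Set (affineSpan ℝ P))) :=
    isOpen_interior.preimage hγc
  have h1 : (1:ℝ) ∈ γ ⁻¹' interior ((↑) ⁻¹' P : Set (affineSpan ℝ P)) := by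
    simp only [Set.mem_preimage, hγ1]; exact hy
  obtain ⟨δ, hδ, hball⟩ := Metric.isOpen_iff.mp hopen 1 h1
  have hδ2 : (1 + δ/2) ∈ Metric.ball (1:ℝ) δ := by
    simp only [Metric.mem_ball, Real.dist_eq]
    rw [show (1 + δ/2 - 1 : ℝ) = δ/2 by ring, abs_of_pos (by linarith)]
    linarith
  have := hball hδ2
  refine ⟨δ/2, by linarith, ?_⟩
  have hPmem : AffineMap.lineMap p x₀ (1 + δ/2) ∈ P := by
    have h2 := interior_subset this
    simpa using h2
  have heq : AffineMap.lineMap p x₀ (1 + δ/2) = x₀ + (δ/2) • (x₀ - p) := by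
    rw [AffineMap.lineMap_apply]
    simp only [vsub_eq_sub, vadd_eq_add]
    module
  rwa [heq] at hPmem

lemma face_eq_of_intrinsicInterior {m : ℕ} {P Q : Set (Fin m → ℝ)}
    (hQ : IsFaceOfPoly Q P) {x₀ : Fin m → ℝ} (hx₀Q : x₀ ∈ Q)
    (hx₀ : x₀ ∈ intrinsicInterior ℝ P) : Q = P := by
  obtain ⟨u, r, hur, rfl⟩ := hQ
  apply Set.Subset.antisymm (Set.sep_subset _ _)
  intro p hp
  obtain ⟨ε, hε, hmem⟩ := exists_extension_of_intrinsicInterior hx₀ hp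
  have h1 : r ≤ u (x₀ + ε • (x₀ - p)) := hur _ hmem
  have h2 : u x₀ = r := hx₀Q.2
  have h3 : u (x₀ + ε • (x₀ - p)) = u x₀ + ε * (u x₀ - u p) := by
    rw [map_add, map_smul, map_sub]
    simp [smul_eq_mul]
  have h4 : r ≤ u p := hur _ hp
  refine ⟨hp, ?_⟩
  rw [h3, h2] at h1
  nlinarith

lemma face_eq_of_interior {m : ℕ} {P Q : Set (Fin m → ℝ)}
    (hQ : IsFaceOfPoly Q P) {x₀ : Fin m → ℝ} (hx₀Q : x₀ ∈ Q)
    (hx₀ : x₀ ∈ interior P) : Q = P :=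
  face_eq_of_intrinsicInterior hQ hx₀Q (interior_subset_intrinsicInterior hx₀)

/-! ### Existence of full-dimensional polyhedra -/

lemma null_of_not_fulldim {m : ℕ} {Q : Set (Fin m → ℝ)} (hconv : Convex ℝ Q)
    (hne : Q.Nonempty) (hfd : ¬ FullDim Q) : MeasureTheory.volume Q = 0 := by
  have hspan : affineSpan ℝ Q ≠ ⊤ := by
    intro htop
    exact hfd ((hconv.interior_nonempty_iff_affineSpan_eq_top).mpr htop)
  refine MeasureTheory.measure_mono_null (subset_affineSpan ℝ Q) ?_
  exact MeasureTheory.Measure.addHaar_affineSubspace _ _ hspan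

lemma exists_fulldim_superset {m : ℕ} {C : PolyComplex m} (hC : C.IsComplete)
    {P : Set (Fin m → ℝ)} (hP : P ∈ C.polys) :
    ∃ Λ ∈ C.polys, FullDim Λ ∧ P ⊆ Λ := by
  obtain ⟨x₀, hx₀⟩ := Set.Nonempty.intrinsicInterior (poly_convex hP) (poly_nonempty hP)
  have hx₀P : x₀ ∈ P := intrinsicInterior_subset hx₀
  -- the union of polyhedra missing x₀ is closed
  set W : Set (Fin m → ℝ) := ⋃ Q ∈ {Q ∈ C.polys | x₀ ∉ Q}, Q with hW
  have hWc : IsClosed W := by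
    refine Set.Finite.isClosed_biUnion (C.finite.subset fun Q hQ => hQ.1) ?_
    exact fun Q hQ => poly_closed hQ.1
  set U : Set (Fin m → ℝ) := Wᶜ with hU
  have hUo : IsOpen U := hWc.isOpen_compl
  have hx₀U : x₀ ∈ U := by
    intro hmem
    obtain ⟨Q, hQ, hxQ⟩ := Set.mem_iUnion₂.mp hmem
    exact hQ.2 hxQ
  have hUsub : U ⊆ ⋃ Q ∈ {Q ∈ C.polys | x₀ ∈ Q}, Q := by
    intro z hz
    have : z ∈ ⋃₀ C.polys := by rw [hC]; trivial
    obtain ⟨Q, hQ, hzQ⟩ := this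
    by_cases hx : x₀ ∈ Q
    · exact Set.mem_iUnion₂.mpr ⟨Q, ⟨hQ, hx⟩, hzQ⟩
    · exact absurd (Set.mem_iUnion₂.mpr ⟨Q, ⟨hQ, hx⟩, hzQ⟩) hz
  -- some polyhedron containing x₀ is full-dimensional
  have hΛ : ∃ Λ ∈ C.polys, x₀ ∈ Λ ∧ FullDim Λ := by
    by_contra hcon
    push_neg at hcon
    have hnull : MeasureTheory.volume (⋃ Q ∈ {Q ∈ C.polys | x₀ ∈ Q}, Q) = 0 := by
      refine MeasureTheory.measure_biUnion_null_iff ?_ |>.mpr ?_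
      · exact (C.finite.subset fun Q hQ => hQ.1).countable
      · intro Q hQ
        exact null_of_not_fulldim (poly_convex hQ.1) ⟨x₀, hQ.2⟩
          (hcon Q hQ.1 hQ.2)
    have hpos : MeasureTheory.volume U ≠ 0 :=
      (hUo.measure_ne_zero MeasureTheory.volume ⟨x₀, hx₀U⟩)
    exact hpos (MeasureTheory.measure_mono_null hUsub hnull)
  obtain ⟨Λ, hΛmem, hx₀Λ, hΛfd⟩ := hΛ
  refine ⟨Λ, hΛmem, hΛfd, ?_⟩
  have hne : (Λ ∩ P).Nonempty := ⟨x₀, hx₀Λ, hx₀P⟩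
  have hface := (C.inter_face Λ hΛmem P hP hne).2
  have := face_eq_of_intrinsicInterior hface (⟨hx₀Λ, hx₀P⟩ : x₀ ∈ Λ ∩ P) hx₀
  intro z hz
  rw [← this] at hz
  exact hz.1

/-! ### Cones at points -/

lemma coneAt_mono {m : ℕ} (v : Fin m → ℝ) {P Q : Set (Fin m → ℝ)} (h : P ⊆ Q) :
    coneAt v P ⊆ coneAt v Q := by
  rintro y ⟨c, hc, x, hx, rfl⟩
  exact ⟨c, hc, x, h hx, rfl⟩

lemma sub_mem_coneAt {m : ℕ} {v x : Fin m → ℝ} {P : Set (Fin m → ℝ)} (hx : x ∈ P) :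
    x - v ∈ coneAt v P := ⟨1, zero_le_one, x, hx, (one_smul _ _).symm⟩

lemma mem_coneAt_inter {m : ℕ} {v : Fin m → ℝ} {P Q : Set (Fin m → ℝ)}
    (hPc : Convex ℝ P) (hQc : Convex ℝ Q) (hvP : v ∈ P) (hvQ : v ∈ Q)
    {y : Fin m → ℝ} (hyP : y ∈ coneAt v P) (hyQ : y ∈ coneAt v Q) :
    y ∈ coneAt v (P ∩ Q) := by
  obtain ⟨c₁, hc₁, x₁, hx₁, he₁⟩ := hyP
  obtain ⟨c₂, hc₂, x₂, hx₂, he₂⟩ := hyQ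
  rcases eq_or_lt_of_le hc₁ with h₁ | h₁
  · exact ⟨0, le_rfl, v, ⟨hvP, hvQ⟩, by rw [he₁, ← h₁]; simp⟩
  rcases eq_or_lt_of_le hc₂ with h₂ | h₂
  · refine ⟨0, le_rfl, v, ⟨hvP, hvQ⟩, ?_⟩
    rw [he₂, ← h₂]; simp
  set t : ℝ := min 1 (c₁/c₂) with ht
  have ht0 : 0 < t := lt_min one_pos (by positivity)
  have ht1 : t ≤ 1 := min_le_left _ _
  have hx2v : x₂ - v = (c₁/c₂) • (x₁ - v) := by
    have hcc : c₂ • (x₂ - v) = c₁ • (x₁ - v) := by rw [← he₁, ← he₂]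
    have h3 : (c₂⁻¹ * c₂) • (x₂ - v) = (c₂⁻¹ * c₁) • (x₁ - v) := by
      rw [mul_smul, mul_smul, hcc]
    rw [inv_mul_cancel₀ h₂.ne', one_smul] at h3
    rw [h3]
    congr 1
    field_simp
  set s : ℝ := t * c₂ / c₁ with hs
  have hs0 : 0 ≤ s := by positivity
  have hs1 : s ≤ 1 := by
    rw [hs, div_le_one h₁]
    calc t * c₂ ≤ (c₁/c₂) * c₂ :=
          mul_le_mul_of_nonneg_right (min_le_right _ _) h₂.le
      _ = c₁ := by field_simp
  set xt : Fin m → ℝ := v + t • (x₁ - v) with hxt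
  have hxtP : xt ∈ P := by
    have hmem := hPc hvP hx₁ (by linarith : (0:ℝ) ≤ 1 - t) ht0.le (by ring)
    have heq : (1-t) • v + t • x₁ = xt := by rw [hxt]; module
    rwa [heq] at hmem
  have hts : xt = v + s • (x₂ - v) := by
    rw [hxt, hx2v, smul_smul, hs]
    congr 2
    field_simp
  have hxtQ : xt ∈ Q := by
    have hmem := hQc hvQ hx₂ (by linarith : (0:ℝ) ≤ 1 - s) hs0 (by ring)
    have heq : (1-s) • v + s • x₂ = v + s • (x₂ - v) := by module
    rw [heq] at hmem
    rwa [← hts] at hmem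
  refine ⟨c₁ / t, by positivity, xt, ⟨hxtP, hxtQ⟩, ?_⟩
  rw [he₁, hxt, add_sub_cancel_left, smul_smul]
  congr 1
  field_simp

/-- Identity principle on a full-dimensional cone. -/
lemma eq_univ_of_eqOn_coneAt {m : ℕ} {F G : (Fin m → ℝ) → ℝ}
    (hF : AnalyticOnNhd ℝ F Set.univ) (hG : AnalyticOnNhd ℝ G Set.univ)
    {Λ : Set (Fin m → ℝ)} (hfd : FullDim Λ) (v : Fin m → ℝ)
    (h : ∀ y ∈ coneAt v Λ, F y = G y) : ∀ z, F z = G z := by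
  obtain ⟨x₀, hx₀⟩ := hfd
  set U : Set (Fin m → ℝ) := (fun z => z + v) ⁻¹' (interior Λ) with hU
  have hUo : IsOpen U := isOpen_interior.preimage (by continuity)
  have hUne : U.Nonempty := ⟨x₀ - v, by simp [hU, hx₀]⟩
  refine analytic_eq_univ hF hG hUo hUne ?_
  intro z hz
  exact h z ⟨1, zero_le_one, z + v, interior_subset hz, by simp⟩

/-! ### Translation of polynomials -/

/-- Substituting `Xᵢ ↦ Xᵢ + wᵢ` in a polynomial. -/
noncomputable def transl {m : ℕ} (w : Fin m → ℚ) (p : MvPolynomial (Fin m) ℚ) :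
    MvPolynomial (Fin m) ℚ :=
  MvPolynomial.aeval (fun i => MvPolynomial.X i + MvPolynomial.C (w i)) p

lemma evalR_transl {m : ℕ} (w : Fin m → ℚ) (p : MvPolynomial (Fin m) ℚ)
    (y : Fin m → ℝ) : evalR (transl w p) y = evalR p (y + ιQ w) := by
  rw [evalR_eq_aeval, evalR_eq_aeval, transl]
  rw [← AlgHom.comp_apply, MvPolynomial.comp_aeval]
  have harg : (fun i => (MvPolynomial.aeval y)
      (MvPolynomial.X i + MvPolynomial.C (w i)) : Fin m → ℝ) = y + ιQ w := by
    funext i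
    simp [ιQ]
  rw [harg]

lemma totalDegree_transl_le {m : ℕ} (w : Fin m → ℚ) (p : MvPolynomial (Fin m) ℚ) :
    (transl w p).totalDegree ≤ p.totalDegree := by
  classical
  rw [transl]
  conv_lhs => rw [p.as_sum]
  rw [map_sum]
  refine le_trans (MvPolynomial.totalDegree_finset_sum _ _) ?_
  rw [Finset.sup_le_iff]
  intro s hs
  rw [MvPolynomial.aeval_monomial]
  refine le_trans (MvPolynomial.totalDegree_mul _ _) ?_
  have h1 : (algebraMap ℚ (MvPolynomial (Fin m) ℚ)
      (MvPolynomial.coeff s p)).totalDegree = 0 := MvPolynomial.totalDegree_C _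
  rw [h1, zero_add]
  have h2 : (s.prod fun i k =>
        (MvPolynomial.X i + MvPolynomial.C (w i) : MvPolynomial (Fin m) ℚ) ^ k)
      = ∏ i ∈ s.support,
        (MvPolynomial.X i + MvPolynomial.C (w i) : MvPolynomial (Fin m) ℚ) ^ (s i) :=
    rfl
  rw [h2]
  refine le_trans (MvPolynomial.totalDegree_finset_prod _ _) ?_
  have h3 : ∀ i ∈ s.support,
      ((MvPolynomial.X i + MvPolynomial.C (w i) : MvPolynomial (Fin m) ℚ)
        ^ (s i)).totalDegree ≤ s i := by
    intro i _
    refine le_trans (MvPolynomial.totalDegree_pow _ _) ?_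
    have hXC : (MvPolynomial.X i + MvPolynomial.C (w i) :
        MvPolynomial (Fin m) ℚ).totalDegree ≤ 1 := by
      refine le_trans (MvPolynomial.totalDegree_add _ _) ?_
      simp [MvPolynomial.totalDegree_X, MvPolynomial.totalDegree_C]
    calc (s i) * (MvPolynomial.X i + MvPolynomial.C (w i) :
          MvPolynomial (Fin m) ℚ).totalDegree
        ≤ s i * 1 := Nat.mul_le_mul_left _ hXC
      _ = s i := mul_one _
  refine le_trans (Finset.sum_le_sum h3) ?_
  exact MvPolynomial.le_totalDegree hs

/-! ### Identity-theorem wrappers for representing polynomials -/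

lemma analytic_shift_add {m : ℕ} (p : MvPolynomial (Fin m) ℚ) (a : Fin m → ℝ) :
    AnalyticOnNhd ℝ (fun x => evalR p (x + a)) Set.univ :=
  (analytic_evalR p).comp (analyticOnNhd_id.add analyticOnNhd_const)
    (Set.mapsTo_univ _ _)

lemma poly_eq_shift_of_coneAt {m : ℕ} {p q : MvPolynomial (Fin m) ℚ}
    {Λ : Set (Fin m → ℝ)} (hfd : FullDim Λ) (v₀ a : Fin m → ℝ)
    (h : ∀ y ∈ coneAt v₀ Λ, evalR p y = evalR q (y + a)) :
    ∀ z, evalR p z = evalR q (z + a) :=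
  eq_univ_of_eqOn_coneAt (analytic_evalR p) (analytic_shift_add q a) hfd v₀ h

lemma poly_eq_of_shifted_eqOn_coneAt {m : ℕ} {p q : MvPolynomial (Fin m) ℚ}
    {Λ : Set (Fin m → ℝ)} (hfd : FullDim Λ) (v₀ a : Fin m → ℝ)
    (h : ∀ y ∈ coneAt v₀ Λ, evalR p (y + a) = evalR q (y + a)) :
    ∀ z, evalR p z = evalR q z := by
  have hall := eq_univ_of_eqOn_coneAt (analytic_shift_add p a)
    (analytic_shift_add q a) hfd v₀ h
  intro z
  have h2 := hall (z - a)
  simpa [sub_add_cancel] using h2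

/-! ### The pullback construction -/

/-- A valid configuration computing the value of the pullback of `f` at `(v', y)`. -/
def Valid {m : ℕ} (C C' : PolyComplex m) (k : ℕ)
    (f : (Fin m → ℝ) → ((Fin m → ℝ) → ℝ)) (v' y : Fin m → ℝ) (r : ℝ) : Prop :=
  ∃ (Λ : Set (Fin m → ℝ)) (v : Fin m → ℝ) (p : MvPolynomial (Fin m) ℚ)
      (P' : Set (Fin m → ℝ)),
    Λ ∈ C.polys ∧ FullDim Λ ∧ v' ∈ Λ ∧ v ∈ C.vtx ∧ v ∈ Λ ∧
    p.totalDegree ≤ k ∧ (∀ z ∈ coneAt v Λ, f v z = evalR p z) ∧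
    P' ∈ C'.polys ∧ v' ∈ P' ∧ P' ⊆ Λ ∧ y ∈ coneAt v' P' ∧
    r = evalR p ((y + v') - v)

/-- Well-definedness: any two valid configurations give the same value. -/
lemma valid_unique {m : ℕ} {C C' : PolyComplex m} {k : ℕ}
    {f : (Fin m → ℝ) → ((Fin m → ℝ) → ℝ)} (hf : AffinePP C k f)
    (hSCR : ∀ P ∈ C.polys, ∃ v ∈ C.vtx, v ∈ P)
    {v' y : Fin m → ℝ} {r₁ r₂ : ℝ}
    (h₁ : Valid C C' k f v' y r₁) (h₂ : Valid C C' k f v' y r₂) : r₁ = r₂ := by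
  obtain ⟨Λ₁, v₁, p₁, P₁', hΛ₁, hfd₁, hv'Λ₁, hv₁, hv₁Λ₁, hp₁d, hp₁, hP₁', hv'P₁',
    hP₁Λ₁, hy₁, hr₁⟩ := h₁
  obtain ⟨Λ₂, v₂, p₂, P₂', hΛ₂, hfd₂, hv'Λ₂, hv₂, hv₂Λ₂, hp₂d, hp₂, hP₂', hv'P₂',
    hP₂Λ₂, hy₂, hr₂⟩ := h₂
  -- y lies in the cone of the intersection
  have hyQ : y ∈ coneAt v' (P₁' ∩ P₂') :=
    mem_coneAt_inter (poly_convex hP₁') (poly_convex hP₂') hv'P₁' hv'P₂' hy₁ hy₂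
  -- the intersection of the two ambient polyhedra and a common vertex
  set S : Set (Fin m → ℝ) := Λ₁ ∩ Λ₂ with hS
  have hSne : S.Nonempty := ⟨v', hv'Λ₁, hv'Λ₂⟩
  have hSmem : S ∈ C.polys := poly_inter_mem hΛ₁ hΛ₂ hSne
  obtain ⟨vs, hvs, hvsS⟩ := hSCR S hSmem
  obtain ⟨q₁, hq₁d, hq₁⟩ := hf.1 vs hvs Λ₁ hΛ₁ hvsS.1
  obtain ⟨q₂, hq₂d, hq₂⟩ := hf.1 vs hvs Λ₂ hΛ₂ hvsS.2
  have cond1 := hf.2 Λ₁ hΛ₁ hfd₁ v₁ hv₁ hv₁Λ₁ vs hvs hvsS.1 p₁ q₁ hp₁d hp₁ hq₁d hq₁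
  have cond2 := hf.2 Λ₂ hΛ₂ hfd₂ v₂ hv₂ hv₂Λ₂ vs hvs hvsS.2 p₂ q₂ hp₂d hp₂ hq₂d hq₂
  -- the two star polynomials at `vs` agree on `S`, hence on `v' + span (S - v')`
  have heqS : ∀ x ∈ S, evalR q₁ (x - vs) = evalR q₂ (x - vs) := by
    intro x hx
    rw [← hq₁ _ (sub_mem_coneAt hx.1), ← hq₂ _ (sub_mem_coneAt hx.2)]
  have hconvS : Convex ℝ S := (poly_convex hΛ₁).inter (poly_convex hΛ₂)
  have hv'S : v' ∈ S := ⟨hv'Λ₁, hv'Λ₂⟩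
  have hspan : y ∈ Submodule.span ℝ ((fun x => x - v') '' S) := by
    obtain ⟨c, hc, x, hxQ, rfl⟩ := hyQ
    exact Submodule.smul_mem _ c (Submodule.subset_span
      ⟨x, ⟨hP₁Λ₁ hxQ.1, hP₂Λ₂ hxQ.2⟩, rfl⟩)
  have hkey := eqOn_span (analytic_shift q₁ vs) (analytic_shift q₂ vs)
    hconvS hv'S heqS y hspan
  -- conclude
  have e₁ : r₁ = evalR q₁ ((v' + y) - vs) := by
    rw [hr₁]
    have := cond1 (y + v')
    rw [this]
    congr 1
    abel
  have e₂ : r₂ = evalR q₂ ((v' + y) - vs) := by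
    rw [hr₂]
    have := cond2 (y + v')
    rw [this]
    congr 1
    abel
  rw [e₁, e₂, hkey]

open Classical in
/-- The pullback of the tuple `f` along the refinement `C' → C`. -/
noncomputable def pullbackT {m : ℕ} (C C' : PolyComplex m) (k : ℕ)
    (f : (Fin m → ℝ) → ((Fin m → ℝ) → ℝ)) : (Fin m → ℝ) → ((Fin m → ℝ) → ℝ) :=
  fun v' y =>
    if v' ∈ C.vtx then f v' y
    else if h : ∃ r, Valid C C' k f v' y r then h.choose else 0

lemma pullbackT_old {m : ℕ} {C C' : PolyComplex m} {k : ℕ}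
    {f : (Fin m → ℝ) → ((Fin m → ℝ) → ℝ)} {v' : Fin m → ℝ} (h : v' ∈ C.vtx) :
    pullbackT C C' k f v' = f v' := by
  funext y
  simp [pullbackT, h]

lemma pullbackT_new {m : ℕ} {C C' : PolyComplex m} {k : ℕ}
    {f : (Fin m → ℝ) → ((Fin m → ℝ) → ℝ)} (hf : AffinePP C k f)
    (hSCR : ∀ P ∈ C.polys, ∃ v ∈ C.vtx, v ∈ P)
    {v' y : Fin m → ℝ} (h : v' ∉ C.vtx) {r : ℝ} (hr : Valid C C' k f v' y r) :
    pullbackT C C' k f v' y = r := by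
  have hex : ∃ r, Valid C C' k f v' y r := ⟨r, hr⟩
  simp only [pullbackT, if_neg h, dif_pos hex]
  exact valid_unique hf hSCR hex.choose_spec hr

/-- A standard configuration over any polyhedron of the refinement. -/
lemma exists_config {m : ℕ} {C C' : PolyComplex m} (hC : C.IsComplete)
    (href : Refines C' C) (hSCR : ∀ P ∈ C.polys, ∃ v ∈ C.vtx, v ∈ P) {k : ℕ}
    {f : (Fin m → ℝ) → ((Fin m → ℝ) → ℝ)} (hf : AffinePP C k f)
    {P' : Set (Fin m → ℝ)} (hP' : P' ∈ C'.polys) :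
    ∃ Λ ∈ C.polys, FullDim Λ ∧ P' ⊆ Λ ∧ ∃ v ∈ C.vtx, v ∈ Λ ∧
      ∃ p : MvPolynomial (Fin m) ℚ, p.totalDegree ≤ k ∧
        ∀ z ∈ coneAt v Λ, f v z = evalR p z := by
  obtain ⟨Q, hQ, hPQ⟩ := href P' hP'
  obtain ⟨Λ, hΛ, hfd, hQΛ⟩ := exists_fulldim_superset hC hQ
  obtain ⟨v, hvv, hvΛ⟩ := hSCR Λ hΛ
  obtain ⟨p, hpd, hp⟩ := hf.1 v hvv Λ hΛ hvΛ
  exact ⟨Λ, hΛ, hfd, hPQ.trans hQΛ, v, hvv, hvΛ, p, hpd, hp⟩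

lemma pullbackT_isPullbackTuple {m : ℕ} {C C' : PolyComplex m} {k : ℕ}
    {f : (Fin m → ℝ) → ((Fin m → ℝ) → ℝ)} (hf : AffinePP C k f)
    (hSCR : ∀ P ∈ C.polys, ∃ v ∈ C.vtx, v ∈ P) :
    IsPullbackTuple C C' k f (pullbackT C C' k f) := by
  constructor
  · intro v' _ hold y _
    rw [pullbackT_old hold]
  · intro v' _ hold Λ hΛ hfd hv'Λ v hvv hvΛ p hpd hp P' hP' hv'P' hPΛ y hy
    exact pullbackT_new hf hSCR hold
      ⟨Λ, v, p, P', hΛ, hfd, hv'Λ, hvv, hvΛ, hpd, hp, hP', hv'P', hPΛ, hy, rfl⟩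

lemma pullbackT_affinePP {m : ℕ} {C C' : PolyComplex m} (hC : C.IsComplete)
    (href : Refines C' C) (hSCR : ∀ P ∈ C.polys, ∃ v ∈ C.vtx, v ∈ P) {k : ℕ}
    {f : (Fin m → ℝ) → ((Fin m → ℝ) → ℝ)} (hf : AffinePP C k f) :
    AffinePP C' k (pullbackT C C' k f) := by
  have htuple := pullbackT_isPullbackTuple (C' := C') hf hSCR
  constructor
  · -- star piecewise polynomiality at every vertex of `C'`
    intro v' hv' P' hP' hv'P'
    by_cases hold : v' ∈ C.vtx
    · obtain ⟨Q, hQ, hPQ⟩ := href P' hP'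
      obtain ⟨q, hqd, hq⟩ := hf.1 v' hold Q hQ (hPQ hv'P')
      refine ⟨q, hqd, fun y hy => ?_⟩
      rw [pullbackT_old hold]
      exact hq y (coneAt_mono v' hPQ hy)
    · obtain ⟨Λ, hΛ, hfd, hPΛ, v, hvv, hvΛ, p, hpd, hp⟩ :=
        exists_config hC href hSCR hf hP'
      have hv'Λ : v' ∈ Λ := hPΛ hv'P'
      obtain ⟨w', hw'⟩ := vtx_rat hv'
      obtain ⟨w₀, hw₀⟩ := vtx_rat hvv
      refine ⟨transl (w' - w₀) p, le_trans (totalDegree_transl_le _ _) hpd, ?_⟩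
      intro y hy
      have hb := htuple.2 v' hv' hold Λ hΛ hfd hv'Λ v hvv hvΛ p hpd hp
        P' hP' hv'P' hPΛ y hy
      rw [hb, evalR_transl]
      congr 1
      funext i
      rw [hw', hw₀]
      simp only [Pi.add_apply, Pi.sub_apply, ιQ]
      push_cast
      ring
  · -- compatibility over full-dimensional polyhedra of `C'`
    intro Λ' hΛ' hfd' v'₁ hv'₁ hv'₁Λ' v'₂ hv'₂ hv'₂Λ' p q hpd hp hqd hq
    obtain ⟨Q, hQ, hΛ'Q⟩ := href Λ' hΛ'
    obtain ⟨Λ, hΛ, hfdΛ, hQΛ⟩ := exists_fulldim_superset hC hQ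
    have hΛ'Λ : Λ' ⊆ Λ := hΛ'Q.trans hQΛ
    obtain ⟨v, hvv, hvΛ⟩ := hSCR Λ hΛ
    obtain ⟨q₀, hq₀d, hq₀⟩ := hf.1 v hvv Λ hΛ hvΛ
    have key : ∀ (v'ᵢ : Fin m → ℝ), v'ᵢ ∈ C'.vtx → v'ᵢ ∈ Λ' →
        ∀ pᵢ : MvPolynomial (Fin m) ℚ, pᵢ.totalDegree ≤ k →
        (∀ y ∈ coneAt v'ᵢ Λ', pullbackT C C' k f v'ᵢ y = evalR pᵢ y) →
        ∀ x, evalR pᵢ (x - v'ᵢ) = evalR q₀ (x - v) := by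
      intro v'ᵢ hᵢ hᵢΛ' pᵢ hpᵢd hpᵢ x
      by_cases hold : v'ᵢ ∈ C.vtx
      · obtain ⟨qᵢ, hqᵢd, hqᵢ⟩ := hf.1 v'ᵢ hold Λ hΛ (hΛ'Λ hᵢΛ')
        have cond2f := hf.2 Λ hΛ hfdΛ v'ᵢ hold (hΛ'Λ hᵢΛ') v hvv hvΛ qᵢ q₀
          hqᵢd hqᵢ hq₀d hq₀
        have heqcone : ∀ y ∈ coneAt v'ᵢ Λ', evalR pᵢ y = evalR qᵢ y := by
          intro y hy
          rw [← hpᵢ y hy, pullbackT_old hold]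
          exact hqᵢ y (coneAt_mono _ hΛ'Λ hy)
        have hall := eq_univ_of_eqOn_coneAt (analytic_evalR pᵢ)
          (analytic_evalR qᵢ) hfd' v'ᵢ heqcone
        rw [hall (x - v'ᵢ)]
        exact cond2f x
      · have heqcone : ∀ y ∈ coneAt v'ᵢ Λ',
            evalR pᵢ y = evalR q₀ (y + (v'ᵢ - v)) := by
          intro y hy
          have hb := htuple.2 v'ᵢ hᵢ hold Λ hΛ hfdΛ (hΛ'Λ hᵢΛ') v hvv hvΛ q₀
            hq₀d hq₀ Λ' hΛ' hᵢΛ' hΛ'Λ y hy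
          rw [← hpᵢ y hy, hb, add_sub_assoc]
        have hall := poly_eq_shift_of_coneAt hfd' v'ᵢ (v'ᵢ - v) heqcone
        rw [hall (x - v'ᵢ), sub_add_sub_cancel]
    have h1 := key v'₁ hv'₁ hv'₁Λ' p hpd hp
    have h2 := key v'₂ hv'₂ hv'₂Λ' q hqd hq
    intro x
    rw [h1 x, ← h2 x]

/-- Existence of a full-dimensional polyhedron of the refinement inside a
full-dimensional polyhedron. -/
lemma exists_fulldim_refined {m : ℕ} {C C' : PolyComplex m} (hC' : C'.IsComplete)
    (href : Refines C' C) {Λ : Set (Fin m → ℝ)} (hΛ : Λ ∈ C.polys)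
    (hfd : FullDim Λ) : ∃ P' ∈ C'.polys, FullDim P' ∧ P' ⊆ Λ := by
  have hyp : ∃ P' ∈ C'.polys, FullDim P' ∧ (P' ∩ interior Λ).Nonempty := by
    by_contra hcon
    push_neg at hcon
    have hnull : ∀ P' ∈ C'.polys,
        MeasureTheory.volume (P' ∩ interior Λ) = 0 := by
      intro P' hP'
      by_cases hfd' : FullDim P'
      · have h := hcon P' hP' hfd'
        simp [h]
      · exact MeasureTheory.measure_mono_null Set.inter_subset_left
          (null_of_not_fulldim (poly_convex hP') (poly_nonempty hP') hfd')
    have hcover : interior Λ ⊆ ⋃ P' ∈ C'.polys, (P' ∩ interior Λ) := by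
      intro z hz
      have hz2 : z ∈ ⋃₀ C'.polys := by rw [hC']; trivial
      obtain ⟨P', h1, h2⟩ := hz2
      exact Set.mem_iUnion₂.mpr ⟨P', h1, h2, hz⟩
    have h0 : MeasureTheory.volume (⋃ P' ∈ C'.polys, (P' ∩ interior Λ)) = 0 :=
      (MeasureTheory.measure_biUnion_null_iff C'.finite.countable).mpr hnull
    exact (isOpen_interior.measure_ne_zero MeasureTheory.volume hfd)
      (MeasureTheory.measure_mono_null hcover h0)
  obtain ⟨P', hP', hfdP', x₁, hx₁P', hx₁i⟩ := hyp
  obtain ⟨Q', hQ', hPQ'⟩ := href P' hP'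
  have hx₁Q' : x₁ ∈ Q' := hPQ' hx₁P'
  have hne : (Q' ∩ Λ).Nonempty := ⟨x₁, hx₁Q', interior_subset hx₁i⟩
  obtain ⟨faceQ, faceΛ⟩ := C.inter_face Q' hQ' Λ hΛ hne
  have hΛQ : Q' ∩ Λ = Λ := face_eq_of_interior faceΛ ⟨hx₁Q', interior_subset hx₁i⟩ hx₁i
  have hΛsub : Λ ⊆ Q' := by
    intro z hz
    rw [← hΛQ] at hz
    exact hz.1
  have hx₁iQ : x₁ ∈ interior Q' := interior_mono hΛsub hx₁i
  have hQΛ : Q' ∩ Λ = Q' := face_eq_of_interior faceQ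
    ⟨hx₁Q', interior_subset hx₁i⟩ hx₁iQ
  refine ⟨P', hP', hfdP', ?_⟩
  intro z hz
  have : z ∈ Q' ∩ Λ := by rw [hQΛ]; exact hPQ' hz
  exact this.2

/-- For a regular SCR polyhedral complex `Π'` refining a complete regular
SCR polyhedral complex `Π`, the pullback `π_s^*` of affine piecewise polynomial functions
(given by `(π_s^* f)_{v'} = f_{v'}` at old vertices and by the translated representing
polynomial `f_{v,Λ}` at new vertices) is well defined (independent of all choices) and is
an injective graded ring homomorphism `PP^*(Π) → PP^*(Π')`. -/
theorem stmt13 {n : ℕ} (C C' : PolyComplex n)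
    (hC : C.IsComplete) (hC' : C'.IsComplete)
    (hreg : C.IsRegular) (hreg' : C'.IsRegular)
    (href : Refines C' C)
    (hSCR : ∀ P ∈ C.polys, ∃ v ∈ C.vtx, v ∈ P)
    (hSCR' : ∀ P ∈ C'.polys, ∃ v ∈ C'.vtx, v ∈ P) (k : ℕ) :
    (∀ f, AffinePP C k f → ∃ f', AffinePP C' k f' ∧ IsPullbackTuple C C' k f f') ∧
    (∀ f f'₁ f'₂, AffinePP C k f → AffinePP C' k f'₁ → AffinePP C' k f'₂ →
      IsPullbackTuple C C' k f f'₁ → IsPullbackTuple C C' k f f'₂ →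
      ∀ v' ∈ C'.vtx, ∀ y, InStar C' v' y → f'₁ v' y = f'₂ v' y) ∧
    (∀ f g f' g', AffinePP C k f → AffinePP C k g →
      IsPullbackTuple C C' k f f' → IsPullbackTuple C C' k g g' →
      (∀ v' ∈ C'.vtx, ∀ y, InStar C' v' y → f' v' y = g' v' y) →
      ∀ v ∈ C.vtx, ∀ y, InStar C v y → f v y = g v y) ∧
    (∀ f g f' g', AffinePP C k f → AffinePP C k g →
      IsPullbackTuple C C' k f f' → IsPullbackTuple C C' k g g' →
      IsPullbackTuple C C' k (fun v y => f v y + g v y) (fun v y => f' v y + g' v y)) ∧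
    (∀ (l : ℕ) f g f' g', AffinePP C k f → AffinePP C l g →
      IsPullbackTuple C C' k f f' → IsPullbackTuple C C' l g g' →
      IsPullbackTuple C C' (k + l) (fun v y => f v y * g v y)
        (fun v y => f' v y * g' v y)) := by
  refine ⟨?_, ?_, ?_, ?_, ?_⟩
  · -- existence of the pullback
    intro f hf
    exact ⟨pullbackT C C' k f, pullbackT_affinePP hC href hSCR hf,
      pullbackT_isPullbackTuple hf hSCR⟩
  · -- uniqueness of the pullback
    intro f f'₁ f'₂ hf _ _ ht₁ ht₂ v' hv' y hy
    by_cases hold : v' ∈ C.vtx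
    · rw [ht₁.1 v' hv' hold y hy, ht₂.1 v' hv' hold y hy]
    · obtain ⟨P₀', hP₀'m, hv'P₀', hyc⟩ := hy
      obtain ⟨Q, hQ, hP₀'Q⟩ := href P₀' hP₀'m
      obtain ⟨Λ, hΛ, hfdΛ, hQΛ⟩ := exists_fulldim_superset hC hQ
      have hP₀'Λ : P₀' ⊆ Λ := hP₀'Q.trans hQΛ
      have hv'Λ : v' ∈ Λ := hP₀'Λ hv'P₀'
      obtain ⟨v, hvv, hvΛ⟩ := hSCR Λ hΛ
      obtain ⟨p, hpd, hp⟩ := hf.1 v hvv Λ hΛ hvΛ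
      rw [ht₁.2 v' hv' hold Λ hΛ hfdΛ hv'Λ v hvv hvΛ p hpd hp
          P₀' hP₀'m hv'P₀' hP₀'Λ y hyc,
        ht₂.2 v' hv' hold Λ hΛ hfdΛ hv'Λ v hvv hvΛ p hpd hp
          P₀' hP₀'m hv'P₀' hP₀'Λ y hyc]
  · -- injectivity
    intro f g f' g' hf hg htf htg hfg v hvv y hy
    obtain ⟨P, hPm, hvP, hyc⟩ := hy
    obtain ⟨Λ, hΛ, hfdΛ, hPΛ⟩ := exists_fulldim_superset hC hPm
    have hvΛ : v ∈ Λ := hPΛ hvP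
    obtain ⟨pf, hpfd, hpf⟩ := hf.1 v hvv Λ hΛ hvΛ
    obtain ⟨pg, hpgd, hpg⟩ := hg.1 v hvv Λ hΛ hvΛ
    obtain ⟨P', hP'm, hfdP', hP'Λ⟩ := exists_fulldim_refined hC' href hΛ hfdΛ
    obtain ⟨v'₀, hv'₀vtx, hv'₀P'⟩ := hSCR' P' hP'm
    have hall : ∀ z, evalR pf z = evalR pg z := by
      by_cases hold : v'₀ ∈ C.vtx
      · -- old vertex
        have hv'₀Λ : v'₀ ∈ Λ := hP'Λ hv'₀P'
        obtain ⟨qf, hqfd, hqf⟩ := hf.1 v'₀ hold Λ hΛ hv'₀Λ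
        obtain ⟨qg, hqgd, hqg⟩ := hg.1 v'₀ hold Λ hΛ hv'₀Λ
        have heqc : ∀ y₀ ∈ coneAt v'₀ P', evalR qf y₀ = evalR qg y₀ := by
          intro y₀ hy₀
          have hstar : InStar C' v'₀ y₀ := ⟨P', hP'm, hv'₀P', hy₀⟩
          rw [← hqf y₀ (coneAt_mono _ hP'Λ hy₀), ← hqg y₀ (coneAt_mono _ hP'Λ hy₀),
            ← htf.1 v'₀ hv'₀vtx hold y₀ hstar, ← htg.1 v'₀ hv'₀vtx hold y₀ hstar]
          exact hfg v'₀ hv'₀vtx y₀ hstar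
        have hqfg := eq_univ_of_eqOn_coneAt (analytic_evalR qf) (analytic_evalR qg)
          hfdP' v'₀ heqc
        have Cf := hf.2 Λ hΛ hfdΛ v hvv hvΛ v'₀ hold hv'₀Λ pf qf hpfd hpf hqfd hqf
        have Cg := hg.2 Λ hΛ hfdΛ v hvv hvΛ v'₀ hold hv'₀Λ pg qg hpgd hpg hqgd hqg
        intro z
        have e1 := Cf (z + v)
        have e2 := Cg (z + v)
        rw [add_sub_cancel_right] at e1 e2
        rw [e1, hqfg ((z + v) - v'₀)]
        exact e2.symm
      · -- new vertex
        have heqc : ∀ y₀ ∈ coneAt v'₀ P',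
            evalR pf (y₀ + (v'₀ - v)) = evalR pg (y₀ + (v'₀ - v)) := by
          intro y₀ hy₀
          have hstar : InStar C' v'₀ y₀ := ⟨P', hP'm, hv'₀P', hy₀⟩
          have hbf := htf.2 v'₀ hv'₀vtx hold Λ hΛ hfdΛ (hP'Λ hv'₀P') v hvv hvΛ
            pf hpfd hpf P' hP'm hv'₀P' hP'Λ y₀ hy₀
          have hbg := htg.2 v'₀ hv'₀vtx hold Λ hΛ hfdΛ (hP'Λ hv'₀P') v hvv hvΛ
            pg hpgd hpg P' hP'm hv'₀P' hP'Λ y₀ hy₀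
          rw [← add_sub_assoc, ← hbf, ← hbg]
          exact hfg v'₀ hv'₀vtx y₀ hstar
        exact poly_eq_of_shifted_eqOn_coneAt hfdP' v'₀ (v'₀ - v) heqc
    rw [hpf y (coneAt_mono _ hPΛ hyc), hpg y (coneAt_mono _ hPΛ hyc), hall y]
  · -- additivity
    intro f g f' g' hf hg htf htg
    constructor
    · intro v' hv' hold y hy
      show f' v' y + g' v' y = f v' y + g v' y
      rw [htf.1 v' hv' hold y hy, htg.1 v' hv' hold y hy]
    · intro v' hv' hold Λ hΛ hfd hv'Λ v hvv hvΛ p hpd hp P' hP'm hv'P' hPΛ y hy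
      obtain ⟨pf, hpfd, hpf⟩ := hf.1 v hvv Λ hΛ hvΛ
      obtain ⟨pg, hpgd, hpg⟩ := hg.1 v hvv Λ hΛ hvΛ
      have hbf := htf.2 v' hv' hold Λ hΛ hfd hv'Λ v hvv hvΛ pf hpfd hpf
        P' hP'm hv'P' hPΛ y hy
      have hbg := htg.2 v' hv' hold Λ hΛ hfd hv'Λ v hvv hvΛ pg hpgd hpg
        P' hP'm hv'P' hPΛ y hy
      have hp' : ∀ z ∈ coneAt v Λ, f v z + g v z = evalR p z := hp
      have heqc : ∀ z ∈ coneAt v Λ, evalR p z = evalR pf z + evalR pg z := by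
        intro z hz
        rw [← hpf z hz, ← hpg z hz, ← hp' z hz]
      have hall := eq_univ_of_eqOn_coneAt (analytic_evalR p)
        ((analytic_evalR pf).add (analytic_evalR pg)) hfd v heqc
      show f' v' y + g' v' y = evalR p ((y + v') - v)
      rw [hbf, hbg, hall ((y + v') - v)]
      rfl
  · -- multiplicativity
    intro l f g f' g' hf hg htf htg
    constructor
    · intro v' hv' hold y hy
      show f' v' y * g' v' y = f v' y * g v' y
      rw [htf.1 v' hv' hold y hy, htg.1 v' hv' hold y hy]
    · intro v' hv' hold Λ hΛ hfd hv'Λ v hvv hvΛ p hpd hp P' hP'm hv'P' hPΛ y hy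
      obtain ⟨pf, hpfd, hpf⟩ := hf.1 v hvv Λ hΛ hvΛ
      obtain ⟨pg, hpgd, hpg⟩ := hg.1 v hvv Λ hΛ hvΛ
      have hbf := htf.2 v' hv' hold Λ hΛ hfd hv'Λ v hvv hvΛ pf hpfd hpf
        P' hP'm hv'P' hPΛ y hy
      have hbg := htg.2 v' hv' hold Λ hΛ hfd hv'Λ v hvv hvΛ pg hpgd hpg
        P' hP'm hv'P' hPΛ y hy
      have hp' : ∀ z ∈ coneAt v Λ, f v z * g v z = evalR p z := hp
      have heqc : ∀ z ∈ coneAt v Λ, evalR p z = evalR pf z * evalR pg z := by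
        intro z hz
        rw [← hpf z hz, ← hpg z hz, ← hp' z hz]
      have hall := eq_univ_of_eqOn_coneAt (analytic_evalR p)
        ((analytic_evalR pf).mul (analytic_evalR pg)) hfd v heqc
      show f' v' y * g' v' y = evalR p ((y + v') - v)
      rw [hbf, hbg, hall ((y + v') - v)]

end PPArakelov
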